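/- If y_0 ∈ (0, 1/√5) satisfies (1/8)(1 + 2y_0²/(1-y_0²))²(1-y_0²) < 1/5, and the sequences (y_i), (h_i) are defined by h_0 = 1 + 2y_0²/(1-y_0²), y_{i+1} = (1 - 2/h_i)y_i, h_{i+1} = h_i + 4y_{i+1}²/(1-y_{i+1}²), and moreover 1 < h_j < 2 for all j ≤ i, then y_0² + y_1² + ... + y_{i+1}² < 1/5. -/

import Mathlib

/-- bound on partial sums of squares y_0²+...+y_{i+1}² < 1/5. -/
theorem stmt_5 (y h : ℕ → ℝ) (i : ℕ)
    (hy0pos : 0 < y 0) (hy0lt : y 0 < 1 / Real.sqrt 5)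
    (hy0cond : (1/8) * (1 + 2 * (y 0)^2 / (1 - (y 0)^2))^2 * (1 - (y 0)^2) < 1/5)
    (hh0 : h 0 = 1 + 2 * (y 0)^2 / (1 - (y 0)^2))
    (hyrec : ∀ k : ℕ, y (k+1) = (1 - 2 / h k) * y k)
    (hhrec : ∀ k : ℕ, h (k+1) = h k + 4 * (y (k+1))^2 / (1 - (y (k+1))^2))
    (hhbound : ∀ j ≤ i, 1 < h j ∧ h j < 2) :
    ∑ j ∈ Finset.range (i+2), (y j)^2 < 1/5 := by
  set s : ℝ := (y 0)^2 with hsdef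
  clear_value s
  have hs0 : 0 < s := hsdef ▸ pow_pos hy0pos 2
  have hs5 : s < 1/5 := by
    have h1 : y 0 ^ 2 < (1 / Real.sqrt 5)^2 :=
      pow_lt_pow_left₀ hy0lt hy0pos.le (by norm_num)
    have h2 : (1 / Real.sqrt 5)^2 = 1/5 := by
      rw [div_pow, Real.sq_sqrt (by norm_num : (5:ℝ) ≥ 0)]; norm_num
    rw [h2] at h1; exact hsdef ▸ h1
  have hs1 : s < 1 := by linarith
  have h1s : 0 < 1 - s := by linarith
  have h1s' : 0 < 1 + s := by linarith
  -- h 0 in closed form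
  have hh0' : h 0 = (1 + s) / (1 - s) := by
    rw [hh0]; field_simp; ring
  set r : ℝ := (1 - 3*s) / (1 + s) with hrdef
  have hr0 : 0 ≤ r := by
    apply div_nonneg (by linarith) h1s'.le
  have hr1 : r < 1 := by
    rw [div_lt_one h1s']; linarith
  have hr2lt : r^2 < 1 := by nlinarith
  have hrh0 : 1 - 2 / h 0 = -r := by
    rw [hh0', hrdef]
    field_simp
    ring
  -- key induction
  have key : ∀ k, k ≤ i + 1 → (y k)^2 ≤ r^(2*k) * s ∧ (k ≤ i → h 0 ≤ h k) := by
    intro k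
    induction k with
    | zero => intro _; constructor
              · simp [hsdef]
              · intro _; exact le_refl _
    | succ k ih =>
      intro hk1
      have hk : k ≤ i := by omega
      obtain ⟨hyk, hhk⟩ := ih (by omega)
      have hh0k : h 0 ≤ h k := hhk hk
      obtain ⟨hk1', hk2'⟩ := hhbound k hk
      have hkpos : 0 < h k := by linarith
      have h0pos : 0 < h 0 := by rw [hh0']; positivity
      -- bound on y (k+1)
      have hfac : (1 - 2 / h k)^2 ≤ r^2 := by
        have hlow : -r ≤ 1 - 2 / h k := by
          have : 2 / h k ≤ 2 / h 0 := by
            apply div_le_div_of_nonneg_left (by norm_num) h0pos hh0k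
          rw [← hrh0]; linarith
        have hup : 1 - 2 / h k ≤ r := by
          have : 1 < 2 / h k := by
            rw [lt_div_iff₀ hkpos]; linarith
          linarith
        exact sq_le_sq' hlow hup
      have hynew : (y (k+1))^2 ≤ r^(2*(k+1)) * s := by
        rw [hyrec k, mul_pow]
        calc (1 - 2 / h k)^2 * (y k)^2 ≤ r^2 * (r^(2*k) * s) := by
              apply mul_le_mul hfac hyk (sq_nonneg _) (sq_nonneg _)
          _ = r^(2*(k+1)) * s := by ring
      refine ⟨hynew, fun hk1i => ?_⟩
      -- h is increasing at step k
      have hr2k : r^(2*(k+1)) ≤ 1 := pow_le_one₀ hr0 hr1.le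
      have hylt1 : (y (k+1))^2 < 1 := by nlinarith
      have : 0 ≤ 4 * (y (k+1))^2 / (1 - (y (k+1))^2) := by
        apply div_nonneg (by positivity) (by linarith)
      rw [hhrec k]; linarith
  -- sum the bound
  have hsum : ∑ j ∈ Finset.range (i+2), (y j)^2 ≤ ∑ j ∈ Finset.range (i+2), r^(2*j) * s := by
    apply Finset.sum_le_sum
    intro j hj
    exact (key j (by simp at hj; omega)).1
  have hgeo : ∑ j ∈ Finset.range (i+2), r^(2*j) * s ≤ s / (1 - r^2) := by
    have : ∑ j ∈ Finset.range (i+2), r^(2*j) * s = (∑ j ∈ Finset.range (i+2), (r^2)^j) * s := by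
      rw [Finset.sum_mul]; congr 1; ext j; rw [← pow_mul]
    rw [this]
    have hge : ∑ j ∈ Finset.range (i+2), (r^2)^j ≤ 1 / (1 - r^2) := by
      rw [geom_sum_eq (ne_of_lt hr2lt)]
      have hpow : 0 ≤ (r^2)^(i+2) := by positivity
      have heq : ((r^2)^(i+2) - 1) / (r^2 - 1) = (1 - (r^2)^(i+2)) / (1 - r^2) := by
        rw [← neg_div_neg_eq]; ring_nf
      rw [heq]
      gcongr
      · linarith
    calc (∑ j ∈ Finset.range (i+2), (r^2)^j) * s ≤ (1 / (1 - r^2)) * s :=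
          mul_le_mul_of_nonneg_right hge hs0.le
      _ = s / (1 - r^2) := by rw [one_div, div_eq_mul_inv, mul_comm]
  have hfinal : s / (1 - r^2) < 1/5 := by
    have e1 : 1 - r^2 = 8*s*(1-s)/((1+s)^2) := by
      rw [hrdef]; field_simp; ring
    have e2 : s/(1-r^2) = (1+s)^2/(8*(1-s)) := by
      rw [e1, div_eq_div_iff (by positivity) (by positivity)]
      field_simp
    have e3 : (1/8)*(1+2*s/(1-s))^2*(1-s) = (1+s)^2/(8*(1-s)) := by
      field_simp; ring
    rw [e2, ← e3]; exact hy0cond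
  linarith
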